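/- Let k ≥ 1 and let G be a tree on n vertices. (a) If a player u is unhappy in G with respect to the SUM-cost (pessimistic, k-local information) via an edge swap (v, w) and performs this swap, then the resulting graph G' is a tree on n vertices and SC_SUM(G) − SC_SUM(G') ≥ 2. (b) Consequently, every sequence G_0, G_1, …, G_T in which G_0 is an n-vertex tree and each G_{t+1} is obtained from G_t by an edge swap performed by a player pessimistically unhappy with respect to the SUM-cost via that swap satisfies T ≤ n³; in particular the SUM swap game by pessimistic players with k-local information starting from a tree has the finite improvement property and reaches a sum-swap equilibrium within n³ edge swaps. -/

import Mathlib

open SimpleGraph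

namespace SwapGame

/-- The set of vertices within distance `k` of `u` in `G` (the `k`-neighborhood). -/
def ball {V : Type} (G : SimpleGraph V) (u : V) (k : ℕ) : Set V :=
  {v | G.edist u v ≤ (k : ℕ∞)}

/-- The graph obtained from `G` by the edge swap `(v, w)` at `u`:
remove the edge `{u, v}` and add the edge `{u, w}`. -/
def swapGraph {V : Type} (G : SimpleGraph V) (u v w : V) : SimpleGraph V :=
  SimpleGraph.fromEdgeSet ((G.edgeSet \ {s(u, v)}) ∪ {s(u, w)})

/-- The edge swap `(v, w)` at `u` is a legal move for a player with `k`-local information: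
`v` is a neighbor of `u` and `w` is a non-neighbor (other than `u`) within distance `k`. -/
def ValidSwap {V : Type} (G : SimpleGraph V) (k : ℕ) (u v w : V) : Prop :=
  G.Adj u v ∧ G.edist u w ≤ (k : ℕ∞) ∧ ¬ G.Adj u w ∧ w ≠ u

/-- `H` (a graph on `W`, with `ι` identifying the view inside `H`) is a finite connected
graph compatible with `u`'s `k`-local view in `G`. -/
def Compatible {V : Type} (G : SimpleGraph V) (k : ℕ) (u : V)
    {W : Type} (H : SimpleGraph W) (ι : V → W) : Prop :=
  Finite W ∧ H.Connected ∧ Set.InjOn ι (ball G u k) ∧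
  {x : W | H.edist (ι u) x ≤ (k : ℕ∞)} = ι '' ball G u k ∧
  ∀ a ∈ ball G u k, ∀ b ∈ ball G u k, (H.Adj (ι a) (ι b) ↔ G.Adj a b)

/-- SUM-cost of player `u` in `H` (`⊤` when `H` is disconnected). -/
noncomputable def cSum {W : Type} (H : SimpleGraph W) (u : W) : ℕ∞ :=
  ∑' v, H.edist u v

/-- MAX-cost (eccentricity) of player `u` in `H` (`⊤` when `H` is disconnected). -/
noncomputable def cMax {W : Type} (H : SimpleGraph W) (u : W) : ℕ∞ :=
  ⨆ v, H.edist u v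

/-- A pessimistic player `u` with `k`-local information is unhappy in `G` w.r.t. the
SUM-cost via the edge swap `(v, w)`: the swap strictly decreases `u`'s cost in every
compatible global graph. -/
def UnhappySumVia {V : Type} (G : SimpleGraph V) (k : ℕ) (u v w : V) : Prop :=
  ValidSwap G k u v w ∧
  ∀ (W : Type) (H : SimpleGraph W) (ι : V → W), Compatible G k u H ι →
    cSum (swapGraph H (ι u) (ι v) (ι w)) (ι u) < cSum H (ι u)

/-- Pessimistic unhappiness w.r.t. the MAX-cost via the edge swap `(v, w)`. -/
def UnhappyMaxVia {V : Type} (G : SimpleGraph V) (k : ℕ) (u v w : V) : Prop :=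
  ValidSwap G k u v w ∧
  ∀ (W : Type) (H : SimpleGraph W) (ι : V → W), Compatible G k u H ι →
    cMax (swapGraph H (ι u) (ι v) (ι w)) (ι u) < cMax H (ι u)

/-- Weakly pessimistic unhappiness w.r.t. the SUM-cost via the edge swap `(v, w)`:
the swap does not increase `u`'s cost in any compatible global graph. -/
def WeakUnhappySumVia {V : Type} (G : SimpleGraph V) (k : ℕ) (u v w : V) : Prop :=
  ValidSwap G k u v w ∧
  ∀ (W : Type) (H : SimpleGraph W) (ι : V → W), Compatible G k u H ι →
    cSum (swapGraph H (ι u) (ι v) (ι w)) (ι u) ≤ cSum H (ι u)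

/-- Weakly pessimistic unhappiness w.r.t. the MAX-cost via the edge swap `(v, w)`. -/
def WeakUnhappyMaxVia {V : Type} (G : SimpleGraph V) (k : ℕ) (u v w : V) : Prop :=
  ValidSwap G k u v w ∧
  ∀ (W : Type) (H : SimpleGraph W) (ι : V → W), Compatible G k u H ι →
    cMax (swapGraph H (ι u) (ι v) (ι w)) (ι u) ≤ cMax H (ι u)

/-- Optimistic unhappiness w.r.t. the SUM-cost via the edge swap `(v, w)`:
the swap strictly decreases `u`'s cost in some compatible global graph
(with the swapped graph connected). -/
def OptUnhappySumVia {V : Type} (G : SimpleGraph V) (k : ℕ) (u v w : V) : Prop :=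
  ValidSwap G k u v w ∧
  ∃ (W : Type) (H : SimpleGraph W) (ι : V → W), Compatible G k u H ι ∧
    (swapGraph H (ι u) (ι v) (ι w)).Connected ∧
    cSum (swapGraph H (ι u) (ι v) (ι w)) (ι u) < cSum H (ι u)

/-- Optimistic unhappiness w.r.t. the MAX-cost via the edge swap `(v, w)`. -/
def OptUnhappyMaxVia {V : Type} (G : SimpleGraph V) (k : ℕ) (u v w : V) : Prop :=
  ValidSwap G k u v w ∧
  ∃ (W : Type) (H : SimpleGraph W) (ι : V → W), Compatible G k u H ι ∧
    (swapGraph H (ι u) (ι v) (ι w)).Connected ∧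
    cMax (swapGraph H (ι u) (ι v) (ι w)) (ι u) < cMax H (ι u)

/-- Sum-swap equilibrium for pessimistic players with `k`-local information. -/
def SumEquilibrium {V : Type} (G : SimpleGraph V) (k : ℕ) : Prop :=
  ∀ u : V, ¬ ∃ v w, UnhappySumVia G k u v w

/-- Max-swap equilibrium for pessimistic players with `k`-local information. -/
def MaxEquilibrium {V : Type} (G : SimpleGraph V) (k : ℕ) : Prop :=
  ∀ u : V, ¬ ∃ v w, UnhappyMaxVia G k u v w

/-- Sum-swap equilibrium for weakly pessimistic players with `k`-local information. -/
def WeakSumEquilibrium {V : Type} (G : SimpleGraph V) (k : ℕ) : Prop :=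
  ∀ u : V, ¬ ∃ v w, WeakUnhappySumVia G k u v w

/-- Max-swap equilibrium for weakly pessimistic players with `k`-local information. -/
def WeakMaxEquilibrium {V : Type} (G : SimpleGraph V) (k : ℕ) : Prop :=
  ∀ u : V, ¬ ∃ v w, WeakUnhappyMaxVia G k u v w

/-- Sum-swap equilibrium for optimistic players with `k`-local information. -/
def OptSumEquilibrium {V : Type} (G : SimpleGraph V) (k : ℕ) : Prop :=
  ∀ u : V, ¬ ∃ v w, OptUnhappySumVia G k u v w

/-- Max-swap equilibrium for optimistic players with `k`-local information. -/
def OptMaxEquilibrium {V : Type} (G : SimpleGraph V) (k : ℕ) : Prop :=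
  ∀ u : V, ¬ ∃ v w, OptUnhappyMaxVia G k u v w

/-- Social SUM-cost of a (connected, finite) graph, as a natural number. -/
noncomputable def scSum {W : Type} [Fintype W] (H : SimpleGraph W) : ℕ :=
  ∑ u : W, ∑ v : W, H.dist u v

/-- Social MAX-cost of a (connected, finite) graph, as a natural number. -/
noncomputable def scMax {W : Type} [Fintype W] (H : SimpleGraph W) : ℕ :=
  ∑ u : W, Finset.univ.sup (H.dist u)

/-- Price of anarchy over `n`-vertex trees for a given notion of equilibrium and
social cost: (max social cost of an equilibrium tree) / (min social cost of a tree). -/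
noncomputable def PoA (n : ℕ) (eqPred : SimpleGraph (Fin n) → Prop)
    (sc : SimpleGraph (Fin n) → ℕ) : ℚ :=
  ((sSup {m : ℕ | ∃ T : SimpleGraph (Fin n), T.IsTree ∧ eqPred T ∧ sc T = m} : ℕ) : ℚ) /
  ((sInf {m : ℕ | ∃ T : SimpleGraph (Fin n), T.IsTree ∧ sc T = m} : ℕ) : ℚ)

section Cross
variable {V : Type} {H D : SimpleGraph V} {p q : V}

lemma reach_tx {K L : SimpleGraph V} (h : ∀ a b, K.Adj a b → L.Reachable a b) :
    ∀ {x y}, K.Reachable x y → L.Reachable x y := by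
  rintro x y ⟨pw⟩
  induction pw with
  | nil => exact Reachable.refl _
  | cons ha _ ih => exact (h _ _ ha).trans ih

lemma adj_cases (hD : D = H.deleteEdges {s(p,q)}) {a b : V} (h : H.Adj a b) :
    D.Adj a b ∨ s(a,b) = s(p,q) := by
  by_cases he : s(a,b) = s(p,q)
  · exact .inr he
  · subst hD; exact .inl (by simp [deleteEdges_adj, h, he])

lemma walk_lb (hD : D = H.deleteEdges {s(p,q)}) (hnr : ¬ D.Reachable p q)
    {x y : V} (pw : H.Walk x y) :
      (D.Reachable p x → D.Reachable p y → D.edist x y ≤ pw.length) ∧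
      (D.Reachable p x → D.Reachable q y → D.edist x p + 1 + D.edist q y ≤ pw.length) ∧
      (D.Reachable q x → D.Reachable p y → D.edist x q + 1 + D.edist p y ≤ pw.length) ∧
      (D.Reachable q x → D.Reachable q y → D.edist x y ≤ pw.length) := by
  induction pw with
  | nil =>
    exact ⟨fun _ _ => by simp, fun h1 h2 => absurd (h1.trans h2.symm) hnr,
      fun h1 h2 => absurd (h2.trans h1.symm) hnr, fun _ _ => by simp⟩
  | @cons a c y h q' ih =>
    have hlen : ((Walk.cons h q').length : ℕ∞) = (q'.length : ℕ∞) + 1 := by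
      rw [Walk.length_cons]; push_cast; ring
    rcases adj_cases hD h with hDadj | he
    · have hac : D.Reachable a c := hDadj.reachable
      have h1 : D.edist a c ≤ 1 := by simpa using D.edist_le hDadj.toWalk
      refine ⟨fun hx hy => ?_, fun hx hy => ?_, fun hx hy => ?_, fun hx hy => ?_⟩ <;>
        rw [hlen]
      · calc D.edist a y ≤ D.edist a c + D.edist c y := D.edist_triangle
          _ ≤ 1 + (q'.length : ℕ∞) := by
              have := ih.1 (hx.trans hac) hy; gcongr
          _ = (q'.length : ℕ∞) + 1 := by ring
      · calc D.edist a p + 1 + D.edist q y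
            ≤ (D.edist a c + D.edist c p) + 1 + D.edist q y := by
              have := D.edist_triangle (u := a) (v := c) (w := p); gcongr
          _ ≤ (1 + D.edist c p) + 1 + D.edist q y := by gcongr
          _ = 1 + (D.edist c p + 1 + D.edist q y) := by ring
          _ ≤ 1 + (q'.length : ℕ∞) := by
              have := ih.2.1 (hx.trans hac) hy; gcongr
          _ = (q'.length : ℕ∞) + 1 := by ring
      · calc D.edist a q + 1 + D.edist p y
            ≤ (D.edist a c + D.edist c q) + 1 + D.edist p y := by
              have := D.edist_triangle (u := a) (v := c) (w := q); gcongr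
          _ ≤ (1 + D.edist c q) + 1 + D.edist p y := by gcongr
          _ = 1 + (D.edist c q + 1 + D.edist p y) := by ring
          _ ≤ 1 + (q'.length : ℕ∞) := by
              have := ih.2.2.1 (hx.trans hac) hy; gcongr
          _ = (q'.length : ℕ∞) + 1 := by ring
      · calc D.edist a y ≤ D.edist a c + D.edist c y := D.edist_triangle
          _ ≤ 1 + (q'.length : ℕ∞) := by
              have := ih.2.2.2 (hx.trans hac) hy; gcongr
          _ = (q'.length : ℕ∞) + 1 := by ring
    · rw [Sym2.eq_iff] at he
      rcases he with ⟨rfl, rfl⟩ | ⟨rfl, rfl⟩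
      · refine ⟨fun hx hy => ?_, fun hx hy => ?_, fun hx hy => ?_, fun hx hy => ?_⟩ <;>
          rw [hlen]
        · have h2 := ih.2.2.1 (Reachable.refl _) hy
          simp only [SimpleGraph.edist_self, zero_add] at h2
          calc D.edist a y ≤ 1 + D.edist a y := le_add_self
            _ ≤ (q'.length : ℕ∞) := h2
            _ ≤ (q'.length : ℕ∞) + 1 := le_self_add
        · have h2 := ih.2.2.2 (Reachable.refl _) hy
          simp only [SimpleGraph.edist_self, zero_add]
          calc 1 + D.edist c y ≤ 1 + (q'.length : ℕ∞) := by gcongr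
            _ = (q'.length : ℕ∞) + 1 := by ring
        · exact absurd hx.symm hnr
        · exact absurd hx.symm hnr
      · refine ⟨fun hx hy => ?_, fun hx hy => ?_, fun hx hy => ?_, fun hx hy => ?_⟩ <;>
          rw [hlen]
        · exact absurd hx hnr
        · exact absurd hx hnr
        · have h2 := ih.1 (Reachable.refl _) hy
          simp only [SimpleGraph.edist_self, zero_add]
          calc 1 + D.edist c y ≤ 1 + (q'.length : ℕ∞) := by gcongr
            _ = (q'.length : ℕ∞) + 1 := by ring
        · have h2 := ih.2.1 (Reachable.refl _) hy
          simp only [SimpleGraph.edist_self, zero_add] at h2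
          calc D.edist a y ≤ 1 + D.edist a y := le_add_self
            _ ≤ (q'.length : ℕ∞) := h2
            _ ≤ (q'.length : ℕ∞) + 1 := le_self_add

lemma Dle (hD : D = H.deleteEdges {s(p,q)}) : D ≤ H := hD ▸ deleteEdges_le _

lemma edist_sameA (hD : D = H.deleteEdges {s(p,q)}) (hnr : ¬ D.Reachable p q)
    {x y : V} (hx : D.Reachable p x) (hy : D.Reachable p y) :
    H.edist x y = D.edist x y := by
  refine le_antisymm (edist_anti (Dle hD)) ?_
  obtain ⟨pw, hpw⟩ := ((hx.symm.trans hy).mono (Dle hD)).exists_walk_length_eq_edist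
  exact hpw ▸ (walk_lb hD hnr pw).1 hx hy

lemma edist_sameB (hD : D = H.deleteEdges {s(p,q)}) (hnr : ¬ D.Reachable p q)
    {x y : V} (hx : D.Reachable q x) (hy : D.Reachable q y) :
    H.edist x y = D.edist x y := by
  refine le_antisymm (edist_anti (Dle hD)) ?_
  obtain ⟨pw, hpw⟩ := ((hx.symm.trans hy).mono (Dle hD)).exists_walk_length_eq_edist
  exact hpw ▸ (walk_lb hD hnr pw).2.2.2 hx hy

lemma edist_cross (hadj : H.Adj p q) (hD : D = H.deleteEdges {s(p,q)})
    (hnr : ¬ D.Reachable p q)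
    {x y : V} (hx : D.Reachable p x) (hy : D.Reachable q y) :
    H.edist x y = D.edist x p + 1 + D.edist q y := by
  refine le_antisymm ?_ ?_
  · calc H.edist x y ≤ H.edist x p + H.edist p y := H.edist_triangle
      _ ≤ H.edist x p + (H.edist p q + H.edist q y) := by
          have := H.edist_triangle (u := p) (v := q) (w := y); gcongr
      _ ≤ D.edist x p + (1 + D.edist q y) := by
          have h1 : H.edist x p ≤ D.edist x p := edist_anti (Dle hD)
          have h2 : H.edist q y ≤ D.edist q y := edist_anti (Dle hD)
          have h3 : H.edist p q ≤ 1 := by simpa using H.edist_le hadj.toWalk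
          gcongr
      _ = D.edist x p + 1 + D.edist q y := by ring
  · have hr : H.Reachable x y :=
      ((hx.symm).mono (Dle hD)).trans ((hadj.reachable).trans ((hy).mono (Dle hD)))
    obtain ⟨pw, hpw⟩ := hr.exists_walk_length_eq_edist
    exact hpw ▸ (walk_lb hD hnr pw).2.1 hx hy

-- dist (ℕ) versions
lemma dist_toNat {K : SimpleGraph V} {x y : V} : K.dist x y = (K.edist x y).toNat := rfl

lemma dist_sameA (hD : D = H.deleteEdges {s(p,q)}) (hnr : ¬ D.Reachable p q)
    {x y : V} (hx : D.Reachable p x) (hy : D.Reachable p y) :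
    H.dist x y = D.dist x y := by
  rw [dist_toNat, dist_toNat, edist_sameA hD hnr hx hy]

lemma dist_sameB (hD : D = H.deleteEdges {s(p,q)}) (hnr : ¬ D.Reachable p q)
    {x y : V} (hx : D.Reachable q x) (hy : D.Reachable q y) :
    H.dist x y = D.dist x y := by
  rw [dist_toNat, dist_toNat, edist_sameB hD hnr hx hy]

lemma dist_cross (hadj : H.Adj p q) (hD : D = H.deleteEdges {s(p,q)})
    (hnr : ¬ D.Reachable p q)
    {x y : V} (hx : D.Reachable p x) (hy : D.Reachable q y) :
    H.dist x y = D.dist x p + 1 + D.dist q y := by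
  obtain ⟨m, hm⟩ := WithTop.ne_top_iff_exists.1 (edist_ne_top_iff_reachable.2 hx.symm)
  obtain ⟨n, hn⟩ := WithTop.ne_top_iff_exists.1 (edist_ne_top_iff_reachable.2 hy)
  have h := edist_cross hadj hD hnr hx hy
  rw [← hm, ← hn] at h
  have hm' : D.edist x p ≠ ⊤ := by rw [← hm]; exact ENat.coe_ne_top m
  have hn' : D.edist q y ≠ ⊤ := by rw [← hn]; exact ENat.coe_ne_top n
  rw [dist_toNat, dist_toNat, dist_toNat, h, hm, hn,
    ENat.toNat_add (by simp [hm']) hn',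
    ENat.toNat_add hm' (by simp)]
  simp

variable [Fintype V] [DecidableEq V]

lemma sum_single (hadj : H.Adj p q) (hD : D = H.deleteEdges {s(p,q)})
    (hnr : ¬ D.Reachable p q) {Af Bf : Finset V}
    (hA : ∀ x, x ∈ Af ↔ D.Reachable p x) (hB : ∀ x, x ∈ Bf ↔ D.Reachable q x)
    (hcov : ∀ x : V, D.Reachable p x ∨ D.Reachable q x) :
    ∑ y, H.dist p y = (∑ y ∈ Af, D.dist p y) + Bf.card + ∑ y ∈ Bf, D.dist q y := by
  have hdisj : Disjoint Af Bf := by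
    rw [Finset.disjoint_left]
    intro x hx1 hx2
    exact hnr (((hA x).1 hx1).trans ((hB x).1 hx2).symm)
  have huniv : Af ∪ Bf = Finset.univ := by
    ext x; simpa [hA, hB] using hcov x
  rw [← huniv, Finset.sum_union hdisj]
  have e1 : ∑ y ∈ Af, H.dist p y = ∑ y ∈ Af, D.dist p y :=
    Finset.sum_congr rfl (fun y hy => dist_sameA hD hnr (Reachable.refl p) ((hA y).1 hy))
  have e2 : ∑ y ∈ Bf, H.dist p y = Bf.card + ∑ y ∈ Bf, D.dist q y := by
    have h2 : ∀ y ∈ Bf, H.dist p y = 1 + D.dist q y := by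
      intro y hy
      rw [dist_cross hadj hD hnr (Reachable.refl p) ((hB y).1 hy), SimpleGraph.dist_self,
        zero_add]
    rw [Finset.sum_congr rfl h2, Finset.sum_add_distrib, Finset.sum_const, smul_eq_mul,
      mul_one]
  rw [e1, e2]; ring

lemma sum_all (hadj : H.Adj p q) (hD : D = H.deleteEdges {s(p,q)})
    (hnr : ¬ D.Reachable p q) {Af Bf : Finset V}
    (hA : ∀ x, x ∈ Af ↔ D.Reachable p x) (hB : ∀ x, x ∈ Bf ↔ D.Reachable q x)
    (hcov : ∀ x : V, D.Reachable p x ∨ D.Reachable q x) :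
    ∑ x, ∑ y, H.dist x y
      = (∑ x ∈ Af, ∑ y ∈ Af, D.dist x y) + (∑ x ∈ Bf, ∑ y ∈ Bf, D.dist x y)
        + 2 * (Bf.card * ((∑ x ∈ Af, D.dist p x) + Af.card)
            + Af.card * (∑ y ∈ Bf, D.dist q y)) := by
  have hdisj : Disjoint Af Bf := by
    rw [Finset.disjoint_left]
    intro x hx1 hx2
    exact hnr (((hA x).1 hx1).trans ((hB x).1 hx2).symm)
  have huniv : Af ∪ Bf = Finset.univ := by
    ext x; simpa [hA, hB] using hcov x
  have hAA : ∑ x ∈ Af, ∑ y ∈ Af, H.dist x y = ∑ x ∈ Af, ∑ y ∈ Af, D.dist x y :=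
    Finset.sum_congr rfl fun x hx => Finset.sum_congr rfl fun y hy =>
      dist_sameA hD hnr ((hA x).1 hx) ((hA y).1 hy)
  have hBB : ∑ x ∈ Bf, ∑ y ∈ Bf, H.dist x y = ∑ x ∈ Bf, ∑ y ∈ Bf, D.dist x y :=
    Finset.sum_congr rfl fun x hx => Finset.sum_congr rfl fun y hy =>
      dist_sameB hD hnr ((hB x).1 hx) ((hB y).1 hy)
  have hAB : ∑ x ∈ Af, ∑ y ∈ Bf, H.dist x y
      = Bf.card * ((∑ x ∈ Af, D.dist p x) + Af.card)
        + Af.card * (∑ y ∈ Bf, D.dist q y) := by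
    have step1 : ∀ x ∈ Af, ∑ y ∈ Bf, H.dist x y
        = Bf.card * (D.dist p x + 1) + ∑ y ∈ Bf, D.dist q y := by
      intro x hx
      have h2 : ∀ y ∈ Bf, H.dist x y = (D.dist p x + 1) + D.dist q y := by
        intro y hy
        rw [dist_cross hadj hD hnr ((hA x).1 hx) ((hB y).1 hy),
          show D.dist x p = D.dist p x from SimpleGraph.dist_comm ..]
      rw [Finset.sum_congr rfl h2, Finset.sum_add_distrib, Finset.sum_const, smul_eq_mul]
    rw [Finset.sum_congr rfl step1, Finset.sum_add_distrib, Finset.sum_const, smul_eq_mul,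
      ← Finset.mul_sum, Finset.sum_add_distrib, Finset.sum_const, smul_eq_mul, mul_one]
  have hBA : ∑ x ∈ Bf, ∑ y ∈ Af, H.dist x y
      = Bf.card * ((∑ x ∈ Af, D.dist p x) + Af.card)
        + Af.card * (∑ y ∈ Bf, D.dist q y) := by
    have step1 : ∀ x ∈ Bf, ∑ y ∈ Af, H.dist x y
        = ((∑ x ∈ Af, D.dist p x) + Af.card) + Af.card * D.dist q x := by
      intro x hx
      have h2 : ∀ y ∈ Af, H.dist x y = (D.dist p y + 1) + D.dist q x := by
        intro y hy
        rw [show H.dist x y = H.dist y x from SimpleGraph.dist_comm ..,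
          dist_cross hadj hD hnr ((hA y).1 hy) ((hB x).1 hx),
          show D.dist y p = D.dist p y from SimpleGraph.dist_comm ..]
      rw [Finset.sum_congr rfl h2, Finset.sum_add_distrib, Finset.sum_const, smul_eq_mul,
        Finset.sum_add_distrib, Finset.sum_const, smul_eq_mul, mul_one]
    rw [Finset.sum_congr rfl step1, Finset.sum_add_distrib, Finset.sum_const, smul_eq_mul,
      ← Finset.mul_sum]
  calc ∑ x, ∑ y, H.dist x y
      = ∑ x ∈ Af ∪ Bf, ∑ y ∈ Af ∪ Bf, H.dist x y := by rw [huniv]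
    _ = (∑ x ∈ Af, ((∑ y ∈ Af, H.dist x y) + ∑ y ∈ Bf, H.dist x y))
        + (∑ x ∈ Bf, ((∑ y ∈ Af, H.dist x y) + ∑ y ∈ Bf, H.dist x y)) := by
        rw [Finset.sum_union hdisj]
        congr 1 <;> exact Finset.sum_congr rfl fun x _ => Finset.sum_union hdisj
    _ = (∑ x ∈ Af, ∑ y ∈ Af, H.dist x y) + (∑ x ∈ Af, ∑ y ∈ Bf, H.dist x y)
        + ((∑ x ∈ Bf, ∑ y ∈ Af, H.dist x y) + ∑ x ∈ Bf, ∑ y ∈ Bf, H.dist x y) := by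
        rw [Finset.sum_add_distrib, Finset.sum_add_distrib]
    _ = _ := by rw [hAA, hBB, hAB, hBA]; ring

end Cross

lemma cover_of_walk {V : Type} {G D : SimpleGraph V} {u v : V}
    (hc : ∀ a b, G.Adj a b → D.Adj a b ∨ s(a,b) = s(u,v)) :
    ∀ {x y : V} (pw : G.Walk x y), (D.Reachable u x ∨ D.Reachable v x) →
      (D.Reachable u y ∨ D.Reachable v y) := by
  intro x y pw
  induction pw with
  | nil => exact id
  | @cons a c y h q ih =>
    intro hx
    apply ih
    rcases hc _ _ h with hDadj | he
    · rcases hx with h1 | h1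
      exacts [Or.inl (h1.trans hDadj.reachable), Or.inr (h1.trans hDadj.reachable)]
    · rw [Sym2.eq_iff] at he
      rcases he with ⟨rfl, rfl⟩ | ⟨rfl, rfl⟩
      exacts [Or.inr (Reachable.refl _), Or.inl (Reachable.refl _)]

lemma compat_self {V : Type} [Fintype V] {G : SimpleGraph V} (hc : G.Connected) (k : ℕ) (u : V) :
    Compatible G k u G id := by
  refine ⟨inferInstance, hc, Set.injOn_id _, ?_, fun a _ b _ => by simp⟩
  rw [Set.image_id]
  rfl

lemma partA {V : Type} [Fintype V] {G : SimpleGraph V} (hT : G.IsTree) {k : ℕ}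
    {u v w : V} (h : UnhappySumVia G k u v w) :
    (swapGraph G u v w).IsTree ∧ scSum (swapGraph G u v w) + 2 ≤ scSum G := by
  classical
  obtain ⟨⟨hAdj, hwk, hnadj, hwu⟩, himp⟩ := h
  set G' := swapGraph G u v w with hG'
  have hadj' : ∀ a b : V, G'.Adj a b ↔
      ((G.Adj a b ∧ s(a,b) ≠ s(u,v)) ∨ (s(a,b) = s(u,w) ∧ a ≠ b)) := by
    intro a b
    rw [hG']
    simp only [swapGraph, fromEdgeSet_adj, Set.mem_union, Set.mem_diff, Set.mem_singleton_iff,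
      mem_edgeSet]
    constructor
    · rintro ⟨h1 | h2, hne⟩
      exacts [Or.inl ⟨h1.1, h1.2⟩, Or.inr ⟨h2, hne⟩]
    · rintro (⟨h1, h2⟩ | ⟨h1, h2⟩)
      exacts [⟨Or.inl ⟨h1, h2⟩, h1.ne⟩, ⟨Or.inr h1, h2⟩]
  -- u's cost strictly decreases (apply pessimism to G itself)
  have hu := himp V G id (compat_self hT.isConnected k u)
  simp only [id_eq] at hu
  rw [← hG'] at hu
  have hcs : ∀ (K : SimpleGraph V) (x : V), cSum K x = ∑ y, K.edist x y :=
    fun K x => tsum_fintype _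
  rw [hcs, hcs] at hu
  have hGfin : ∀ x y : V, G.edist x y ≠ ⊤ :=
    fun x y => edist_ne_top_iff_reachable.2 (hT.isConnected.preconnected x y)
  have hGne : (∑ y, G.edist u y) ≠ ⊤ :=
    (WithTop.sum_lt_top.2 fun y _ => lt_top_iff_ne_top.2 (hGfin u y)).ne
  have hlt_top : (∑ y, G'.edist u y) < ⊤ := hu.trans (lt_top_iff_ne_top.2 hGne)
  have hreach : ∀ y : V, G'.Reachable u y := by
    intro y
    have : G'.edist u y < ⊤ :=
      lt_of_le_of_lt (Finset.single_le_sum (f := fun y => G'.edist u y)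
        (fun i _ => zero_le) (Finset.mem_univ y)) hlt_top
    exact reachable_of_edist_ne_top this.ne
  have hconn' : G'.Connected := by
    rw [connected_iff]
    exact ⟨fun x y => (hreach x).symm.trans (hreach y), ⟨u⟩⟩
  -- the bridge decomposition
  set D := G.deleteEdges {s(u,v)} with hD
  have hnr : ¬ D.Reachable u v :=
    (isBridge_iff.1 ((isAcyclic_iff_forall_edge_isBridge.1 hT.IsAcyclic)
      ((mem_edgeSet G).2 hAdj)))
  have hcov : ∀ x, D.Reachable u x ∨ D.Reachable v x := by
    intro x
    obtain ⟨pw⟩ := hT.isConnected.preconnected u x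
    exact cover_of_walk (fun a b hab => adj_cases hD hab) pw (Or.inl (Reachable.refl _))
  have hwB : D.Reachable v w := by
    rcases hcov w with hA | hB
    · exfalso
      have htx : ∀ a b, G'.Adj a b → D.Reachable a b := by
        intro a b hab
        rcases (hadj' a b).1 hab with ⟨h1, h2⟩ | ⟨h1, _⟩
        · exact (Adj.reachable (by rw [hD]; exact deleteEdges_adj.2 ⟨h1, by simpa using h2⟩))
        · rw [Sym2.eq_iff] at h1
          rcases h1 with ⟨rfl, rfl⟩ | ⟨rfl, rfl⟩
          exacts [hA, hA.symm]
      exact hnr (reach_tx htx (hconn'.preconnected u v))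
    · exact hB
  have hD' : D = G'.deleteEdges {s(u,w)} := by
    ext a b
    simp only [deleteEdges_adj, hadj' a b, Set.mem_singleton_iff, hD]
    constructor
    · rintro ⟨h1, h2⟩
      refine ⟨Or.inl ⟨h1, by simpa using h2⟩, ?_⟩
      intro he
      exact hnadj (by rwa [← mem_edgeSet, ← he, mem_edgeSet])
    · rintro ⟨h1 | h1, h2⟩
      exacts [⟨h1.1, by simpa using h1.2⟩, absurd h1.1 h2]
  have hnr' : ¬ D.Reachable u w := fun hh => hnr (hh.trans hwB.symm)
  have hadjG' : G'.Adj u w := (hadj' u w).2 (Or.inr ⟨rfl, hwu.symm⟩)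
  -- acyclicity of the new graph
  have hacy : G'.IsAcyclic := by
    intro x c hc
    by_cases he : s(u,w) ∈ c.edges
    · have h2 := (adj_and_reachable_delete_edges_iff_exists_cycle.2 ⟨x, c, hc, he⟩).2
      exact hnr' (hD' ▸ h2)
    · have hedges : ∀ e ∈ c.edges, e ∈ G.edgeSet := by
        intro e he'
        have hmem := c.edges_subset_edgeSet he'
        induction e with
        | h a b =>
          rcases (hadj' a b).1 ((mem_edgeSet _).1 hmem) with ⟨h1, _⟩ | ⟨h1, _⟩
          · exact (mem_edgeSet _).2 h1
          · exact absurd (h1 ▸ he') he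
      exact hT.IsAcyclic (c.transfer G hedges) (hc.transfer hedges)
  have hTree' : G'.IsTree := ⟨hconn', hacy⟩
  refine ⟨hTree', ?_⟩
  -- the social cost computation
  set Af : Finset V := Finset.univ.filter (fun x => D.Reachable u x) with hAf
  set Bf : Finset V := Finset.univ.filter (fun x => D.Reachable v x) with hBf
  have hA : ∀ x, x ∈ Af ↔ D.Reachable u x := by intro x; simp [hAf]
  have hBv : ∀ x, x ∈ Bf ↔ D.Reachable v x := by intro x; simp [hBf]
  have hBw : ∀ x, x ∈ Bf ↔ D.Reachable w x :=
    fun x => (hBv x).trans ⟨fun h2 => hwB.symm.trans h2, fun h2 => hwB.trans h2⟩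
  have hcovw : ∀ x, D.Reachable u x ∨ D.Reachable w x :=
    fun x => (hcov x).imp id fun h2 => hwB.symm.trans h2
  have hsumG := sum_all hAdj hD hnr hA hBv hcov
  have hsumG' := sum_all hadjG' hD' hnr' hA hBw hcovw
  have hsG := sum_single hAdj hD hnr hA hBv hcov
  have hsG' := sum_single hadjG' hD' hnr' hA hBw hcovw
  -- extract the strict inequality on u's distances in ℕ
  have hreachG' : ∀ y, G'.edist u y ≠ ⊤ := fun y => edist_ne_top_iff_reachable.2 (hreach y)
  have hcast : ∀ (K : SimpleGraph V), (∀ y, K.edist u y ≠ ⊤) →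
      (∑ y, K.edist u y) = ((∑ y, K.dist u y : ℕ) : ℕ∞) := by
    intro K hK
    rw [Nat.cast_sum]
    exact Finset.sum_congr rfl fun y _ => by rw [dist_toNat, ENat.coe_toNat (hK y)]
  rw [hcast G' hreachG', hcast G (hGfin u), Nat.cast_lt] at hu
  rw [hsG, hsG'] at hu
  have hSw : (∑ y ∈ Bf, D.dist w y) + 1 ≤ ∑ y ∈ Bf, D.dist v y := by omega
  have ha : 1 ≤ Af.card := Finset.card_pos.2 ⟨u, (hA u).2 (Reachable.refl _)⟩
  show (∑ x, ∑ y, G'.dist x y) + 2 ≤ ∑ x, ∑ y, G.dist x y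
  rw [hsumG, hsumG']
  nlinarith [hSw, ha]


theorem stmt3 (k : ℕ) (hk : 1 ≤ k) (n : ℕ) :
    (∀ (V : Type) [Fintype V], ∀ (G : SimpleGraph V), Fintype.card V = n → G.IsTree →
      ∀ u v w : V, UnhappySumVia G k u v w →
        (swapGraph G u v w).IsTree ∧ scSum (swapGraph G u v w) + 2 ≤ scSum G) ∧
    (∀ (T : ℕ) (Gs : ℕ → SimpleGraph (Fin n)), (Gs 0).IsTree →
      (∀ t < T, ∃ u v w, UnhappySumVia (Gs t) k u v w ∧
        Gs (t + 1) = swapGraph (Gs t) u v w) →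
      T ≤ n ^ 3) := by
  constructor
  · intro V _ G _ hT u v w h
    exact partA hT h
  · intro T Gs h0 hstep
    have claim : ∀ t, t ≤ T → (Gs t).IsTree ∧ scSum (Gs t) + 2 * t ≤ scSum (Gs 0) := by
      intro t
      induction t with
      | zero => exact fun _ => ⟨h0, by omega⟩
      | succ t ih =>
        intro hkt
        obtain ⟨hTt, hsc⟩ := ih (by omega)
        obtain ⟨u, v, w, hun, heq⟩ := hstep t (by omega)
        have h2 := partA hTt hun
        rw [← heq] at h2
        exact ⟨h2.1, by omega⟩
    obtain ⟨hTree, hsc⟩ := claim T le_rfl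
    have hb : ∀ x y : Fin n, (Gs 0).dist x y ≤ n - 1 := by
      intro x y
      obtain ⟨p, hp, hl⟩ := (h0.isConnected.preconnected x y).exists_path_of_dist
      have := hp.length_lt
      rw [Fintype.card_fin] at this
      omega
    have hsc0 : scSum (Gs 0) ≤ n * n * (n - 1) := by
      calc scSum (Gs 0) = ∑ x : Fin n, ∑ y : Fin n, (Gs 0).dist x y := rfl
        _ ≤ ∑ _x : Fin n, ∑ _y : Fin n, (n - 1) := by
            refine Finset.sum_le_sum fun x _ => Finset.sum_le_sum fun y _ => hb x y
        _ = n * n * (n - 1) := by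
            simp [Finset.sum_const, Finset.card_univ, Fintype.card_fin]
            ring
    have h1n : 1 ≤ n := by
      have : Nonempty (Fin n) := h0.isConnected.nonempty
      simpa [Nat.succ_le_iff, Nat.pos_iff_ne_zero] using Fin.pos_iff_nonempty.2 this
    have hcube : n * n * (n - 1) ≤ n ^ 3 := by
      have : n - 1 ≤ n := Nat.sub_le _ _
      calc n * n * (n - 1) ≤ n * n * n := Nat.mul_le_mul_left _ this
        _ = n ^ 3 := by ring
    omega

end SwapGame
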